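/- Let n ≥ 2, let 1 ≤ k ≤ n−1, and let f ∈ Q₀ⁿ. Then ‖f‖₁^{k/n} · ‖f‖_∞^{(n−k)/n} ≤ (n/k)^k · ‖f‖_{n/k}, and moreover (n/k)^k ≤ e^{n−k}, so that ‖f‖₁^{k/n} · ‖f‖_∞^{(n−k)/n} ≤ e^{n−k} · ‖f‖_{n/k}. -/

import Mathlib

open MeasureTheory

noncomputable section

/-- `ℝⁿ` with its Euclidean structure. -/
abbrev Eucl (n : ℕ) := EuclideanSpace ℝ (Fin n)

/-- `f : ℝⁿ → [0,∞)` is log-concave: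
`f(tx+(1−t)y) ≥ f(x)^t · f(y)^(1−t)` for all `x, y` and `t ∈ (0,1)`. -/
def IsLogConcave {n : ℕ} (f : Eucl n → ℝ) : Prop :=
  ∀ x y : Eucl n, ∀ t : ℝ, 0 < t → t < 1 →
    f x ^ t * f y ^ (1 - t) ≤ f (t • x + (1 - t) • y)

/-- The class `Q₀ⁿ`: nonnegative, log-concave, upper semicontinuous, integrable
functions with positive integral. -/
def MemQ0 {n : ℕ} (f : Eucl n → ℝ) : Prop :=
  (∀ x, 0 ≤ f x) ∧ IsLogConcave f ∧ UpperSemicontinuous f ∧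
    Integrable f ∧ 0 < ∫ x, f x

/-- `‖f‖_∞ = sup f`. -/
def supNorm {n : ℕ} (f : Eucl n → ℝ) : ℝ := ⨆ x, f x

/-- `‖f‖_p = (∫ f^p)^(1/p)`. -/
def lpNorm {n : ℕ} (p : ℝ) (f : Eucl n → ℝ) : ℝ := (∫ x, f x ^ p) ^ (1 / p)

/-- `‖P_H f‖_{L¹(H)} = ∫_H sup_{z ∈ H⊥} f(y+z) dλ_H(y)`, the `L¹(H)`-norm of the
projection of `f` onto the subspace `H` (with the Lebesgue measure on `H` induced
by the Euclidean structure). -/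
def projL1 {n : ℕ} (f : Eucl n → ℝ) (H : Submodule ℝ (Eucl n)) : ℝ :=
  ∫ y : H, ⨆ z : Hᗮ, f ((y : Eucl n) + (z : Eucl n))

/-- `‖S_H f‖_{L¹(H)} = ∫_H f dλ_H`, the integral of the section `f|_H`. -/
def sectL1 {n : ℕ} (f : Eucl n → ℝ) (H : Submodule ℝ (Eucl n)) : ℝ :=
  ∫ y : H, f (y : Eucl n)

/-- Auxiliary: the main inequality. -/
theorem main_ineq (n k : ℕ) (hn : 2 ≤ n) (hk1 : 1 ≤ k) (hk2 : k ≤ n - 1)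
    (f : Eucl n → ℝ) (hf : MemQ0 f) :
    (∫ x, f x) ^ ((k : ℝ) / n) * supNorm f ^ (((n : ℝ) - k) / n) ≤
        ((n : ℝ) / k) ^ k * lpNorm ((n : ℝ) / k) f := by
  obtain ⟨hf0, hlc, _husc, hint, hIpos⟩ := hf
  have hknN : k < n := by omega
  have hn0 : (0:ℝ) < n := by exact_mod_cast (by omega : 0 < n)
  have hk0 : (0:ℝ) < k := by exact_mod_cast hk1
  have hkn : (k:ℝ) < n := by exact_mod_cast hknN
  set I : ℝ := ∫ x, f x with hI
  set p : ℝ := (n:ℝ)/k with hp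
  set q : ℝ := (k:ℝ)/n with hqdef
  have hq0 : 0 < q := div_pos hk0 hn0
  have hq1 : q < 1 := (div_lt_one hn0).2 hkn
  have hp0 : 0 < p := div_pos hn0 hk0
  have hqp : q * p = 1 := by rw [hqdef, hp]; field_simp
  have hpq : p * q = 1 := by rw [hqdef, hp]; field_simp
  set J : ℝ := ∫ x, f x ^ p with hJ
  have hJ0 : 0 ≤ J := integral_nonneg fun x => Real.rpow_nonneg (hf0 x) p
  have hlp : lpNorm p f = J ^ q := by
    rw [_root_.lpNorm, hp, one_div_div, ← hqdef, ← hJ]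
  have hexp : ((n:ℝ) - k)/n = 1 - q := by
    rw [sub_div, div_self hn0.ne', hqdef]
  rw [hexp, hlp]
  have h1q0 : 0 < 1 - q := by linarith
  by_cases hbdd : BddAbove (Set.range f)
  swap
  · have hsup : supNorm f = 0 := Real.iSup_of_not_bddAbove hbdd
    rw [hsup, Real.zero_rpow h1q0.ne', mul_zero]
    positivity
  -- bounded case
  set M : ℝ := supNorm f with hM
  have hMs : M = sSup (Set.range f) := by rw [hM, supNorm, iSup]
  have hle : ∀ x, f x ≤ M := fun x => by
    rw [hMs]; exact le_csSup hbdd (Set.mem_range_self x)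
  have hM0 : 0 ≤ M := le_trans (hf0 0) (hle 0)
  have hMpos : 0 < M := by
    rcases hM0.lt_or_eq with h | h
    · exact h
    · exfalso
      have : ∀ x, f x = 0 := fun x => le_antisymm (by rw [← h] at hle; exact hle x) (hf0 x)
      have : I = 0 := by
        rw [hI]; simp [funext this]
      linarith
  set s : ℝ := (1 - q) * p with hs
  have hs0 : 0 < s := mul_pos h1q0 hp0
  have hps : p = s + 1 := by
    rw [hs, sub_mul, one_mul, hqp]; ring
  -- integrability of f ^ p
  have hmeasp : AEStronglyMeasurable (fun y => f y ^ p) volume :=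
    (Real.continuous_rpow_const hp0.le).comp_aestronglyMeasurable hint.aestronglyMeasurable
  have hFbound : ∀ y, f y ^ p ≤ M ^ s * f y := by
    intro y
    rcases (hf0 y).lt_or_eq with h0 | h0
    · rw [hps, Real.rpow_add h0, Real.rpow_one]
      exact mul_le_mul_of_nonneg_right
        (Real.rpow_le_rpow (hf0 y) (hle y) hs0.le) (hf0 y)
    · rw [← h0, Real.zero_rpow hp0.ne', mul_zero]
  have hFint : Integrable (fun y => f y ^ p) := by
    refine Integrable.mono' (hint.const_mul (M ^ s)) hmeasp (Filter.Eventually.of_forall ?_)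
    intro y
    rw [Real.norm_eq_abs, abs_of_nonneg (Real.rpow_nonneg (hf0 y) p)]
    exact hFbound y
  -- key inequality for each near-maximizer
  have hkey1 : ∀ x₀ : Eucl n, 0 < f x₀ → I * (q ^ n) * (f x₀) ^ s ≤ J := by
    intro x₀ hm
    set c : Eucl n := (1 - q) • x₀ with hc
    set m : ℝ := f x₀ with hmm
    have claim : ∀ x, f x * m ^ s ≤ f (q • x + c) ^ p := by
      intro x
      rcases (hf0 x).lt_or_eq with h0 | h0
      · have h1 := hlc x x₀ q hq0 hq1
        have h2 : (f x ^ q * m ^ (1 - q)) ^ p ≤ f (q • x + c) ^ p :=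
          Real.rpow_le_rpow (by positivity) h1 hp0.le
        calc f x * m ^ s
            = (f x ^ q * m ^ (1 - q)) ^ p := by
              rw [Real.mul_rpow (Real.rpow_nonneg (hf0 x) q) (Real.rpow_nonneg hm.le _),
                ← Real.rpow_mul (hf0 x), ← Real.rpow_mul hm.le, hqp, Real.rpow_one, ← hs]
          _ ≤ f (q • x + c) ^ p := h2
      · rw [← h0, zero_mul]
        exact Real.rpow_nonneg (hf0 _) p
    have hcomp : Integrable (fun x : Eucl n => f (q • x + c) ^ p) := by
      have h1 : Integrable (fun y : Eucl n => f (y + c) ^ p) := hFint.comp_add_right c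
      exact h1.comp_smul hq0.ne'
    have hcv : (∫ x : Eucl n, f (q • x + c) ^ p) = ((q ^ n : ℝ))⁻¹ * J := by
      have h2 := MeasureTheory.Measure.integral_comp_smul_of_nonneg (volume : Measure (Eucl n))
        (fun y => f (y + c) ^ p) q (hR := hq0.le)
      simp only [smul_eq_mul, finrank_euclideanSpace_fin] at h2
      rw [integral_add_right_eq_self (fun y => f y ^ p) c] at h2
      exact h2
    have hstep : I * m ^ s ≤ ((q ^ n : ℝ))⁻¹ * J := by
      calc I * m ^ s = ∫ x, f x * m ^ s := by
            rw [integral_mul_const]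
        _ ≤ ∫ x, f (q • x + c) ^ p :=
            integral_mono (hint.mul_const _) hcomp claim
        _ = ((q ^ n : ℝ))⁻¹ * J := hcv
    have hqn : (0:ℝ) < q ^ n := pow_pos hq0 n
    calc I * (q ^ n) * m ^ s = (q ^ n) * (I * m ^ s) := by ring
      _ ≤ (q ^ n) * (((q ^ n : ℝ))⁻¹ * J) :=
          mul_le_mul_of_nonneg_left hstep hqn.le
      _ = J := by field_simp
  -- pass to supremum
  have hkey : I * (q ^ n) * M ^ s ≤ J := by
    obtain ⟨u, _hu_mono, hu_tendsto, hu_mem⟩ :=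
      exists_seq_tendsto_sSup (Set.range_nonempty f) hbdd
    rw [← hMs] at hu_tendsto
    have hcont : ContinuousAt (fun x : ℝ => x ^ s) M :=
      Real.continuousAt_rpow_const M s (Or.inl hMpos.ne')
    have hlim : Filter.Tendsto (fun j => I * (q ^ n) * (u j) ^ s)
        Filter.atTop (nhds (I * (q ^ n) * M ^ s)) :=
      Filter.Tendsto.mul tendsto_const_nhds (hcont.tendsto.comp hu_tendsto)
    refine le_of_tendsto hlim ?_
    have hev : ∀ᶠ j in Filter.atTop, 0 < u j :=
      hu_tendsto.eventually (eventually_gt_nhds hMpos)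
    filter_upwards [hev] with j hj
    obtain ⟨x₀, hx₀⟩ := hu_mem j
    rw [← hx₀] at hj ⊢
    exact hkey1 x₀ hj
  -- raise to power q and rearrange
  have hIqn : 0 ≤ I * q ^ n * M ^ s := by positivity
  have h3 : (I * q ^ n * M ^ s) ^ q ≤ J ^ q :=
    Real.rpow_le_rpow hIqn hkey hq0.le
  have hexpand : (I * q ^ n * M ^ s) ^ q = I ^ q * q ^ k * M ^ (1 - q) := by
    rw [Real.mul_rpow (by positivity) (Real.rpow_nonneg hM0 s),
      Real.mul_rpow hIpos.le (by positivity), ← Real.rpow_mul hM0]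
    have h4 : s * q = 1 - q := by
      rw [hs, mul_assoc, hpq, mul_one]
    have h5 : ((q : ℝ) ^ n) ^ q = q ^ k := by
      rw [← Real.rpow_natCast q n, ← Real.rpow_mul hq0.le, ← Real.rpow_natCast q k]
      congr 1
      rw [hqdef]; field_simp
    rw [h4, h5]
  rw [hexpand] at h3
  have hpk : p ^ k * q ^ k = 1 := by
    rw [← mul_pow, hpq, one_pow]
  calc I ^ q * M ^ (1 - q) = p ^ k * (I ^ q * q ^ k * M ^ (1 - q)) := by
        rw [show p ^ k * (I ^ q * q ^ k * M ^ (1 - q)) =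
          (p ^ k * q ^ k) * (I ^ q * M ^ (1 - q)) by ring, hpk, one_mul]
    _ ≤ p ^ k * J ^ q := mul_le_mul_of_nonneg_left h3 (by positivity)


/-- Auxiliary: `(n/k)^k ≤ e^(n-k)`. -/
theorem pow_div_le_exp_pow (n k : ℕ) (hk1 : 1 ≤ k) (hkn : k ≤ n) :
    ((n : ℝ) / k) ^ k ≤ Real.exp 1 ^ (n - k) := by
  have hk0 : (0:ℝ) < k := by exact_mod_cast hk1
  have h1 : (n : ℝ) / k = ((n - k : ℕ) : ℝ) / k + 1 := by
    rw [Nat.cast_sub hkn]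
    field_simp
    ring
  have h2 : (n : ℝ) / k ≤ Real.exp (((n - k : ℕ) : ℝ) / k) := by
    rw [h1]; exact Real.add_one_le_exp _
  have h3 : ((n : ℝ) / k) ^ k ≤ Real.exp (((n - k : ℕ) : ℝ) / k) ^ k :=
    pow_le_pow_left₀ (by positivity) h2 k
  refine h3.trans (le_of_eq ?_)
  rw [← Real.exp_nat_mul, ← Real.exp_nat_mul]
  congr 1
  field_simp

/-- **Lemma 4.9**: for `f ∈ Q₀ⁿ` and `1 ≤ k ≤ n−1`,
`‖f‖₁^{k/n}·‖f‖_∞^{(n−k)/n} ≤ (n/k)^k·‖f‖_{n/k}`, and `(n/k)^k ≤ e^{n−k}`, hence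
`‖f‖₁^{k/n}·‖f‖_∞^{(n−k)/n} ≤ e^{n−k}·‖f‖_{n/k}`. -/
theorem int_sup_le_lpNorm (n k : ℕ) (hn : 2 ≤ n) (hk1 : 1 ≤ k) (hk2 : k ≤ n - 1)
    (f : Eucl n → ℝ) (hf : MemQ0 f) :
    (∫ x, f x) ^ ((k : ℝ) / n) * supNorm f ^ (((n : ℝ) - k) / n) ≤
        ((n : ℝ) / k) ^ k * lpNorm ((n : ℝ) / k) f ∧
      ((n : ℝ) / k) ^ k ≤ Real.exp 1 ^ (n - k) ∧
      (∫ x, f x) ^ ((k : ℝ) / n) * supNorm f ^ (((n : ℝ) - k) / n) ≤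
        Real.exp 1 ^ (n - k) * lpNorm ((n : ℝ) / k) f := by
  constructor
  · exact main_ineq n k hn hk1 hk2 f hf
  constructor
  · exact pow_div_le_exp_pow n k hk1 (by omega)
  · refine (main_ineq n k hn hk1 hk2 f hf).trans ?_
    refine mul_le_mul_of_nonneg_right (pow_div_le_exp_pow n k hk1 (by omega)) ?_
    rw [_root_.lpNorm]
    exact Real.rpow_nonneg
      (integral_nonneg fun x => Real.rpow_nonneg (hf.1 x) _) _
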